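/- For every integer n ≥ 1, the number of flattened Catalan words of length n equals (3^(n-1) + 1)/2. -/

import Mathlib

/-- `w : ℕ → ℕ` encodes a Catalan word of length `n` (0-indexed letters
`w 0, w 1, …, w (n-1)`): the first letter is `0`, each letter is at most the
previous one plus one, and `w` is normalized to vanish at positions `≥ n`. -/
def IsCatalanWord (n : ℕ) (w : ℕ → ℕ) : Prop :=
  w 0 = 0 ∧ (∀ i, i + 1 < n → w (i + 1) ≤ w i + 1) ∧ ∀ i, n ≤ i → w i = 0

/-- `j` is the starting position of one of the maximal weakly increasing
contiguous subwords (runs of weak ascents) of the length-`n` word `w`. -/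
def IsRunStart (n : ℕ) (w : ℕ → ℕ) (j : ℕ) : Prop :=
  j < n ∧ (j = 0 ∨ w j < w (j - 1))

/-- A word is flattened when the leading terms of its maximal weakly increasing
contiguous subwords, read from left to right, form a weakly increasing sequence. -/
def IsFlattened (n : ℕ) (w : ℕ → ℕ) : Prop :=
  ∀ i j, IsRunStart n w i → IsRunStart n w j → i ≤ j → w i ≤ w j

/-- The set of flattened Catalan words of length `n`. -/
def FlatCat (n : ℕ) : Set (ℕ → ℕ) := {w | IsCatalanWord n w ∧ IsFlattened n w}

/-- Number of maximal strictly increasing contiguous subwords (runs of ascents):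
`1 + #{ i : w_i ≥ w_{i+1} }`. -/
noncomputable def runsAsc (n : ℕ) (w : ℕ → ℕ) : ℕ :=
  1 + {i : ℕ | i + 1 < n ∧ w (i + 1) ≤ w i}.ncard

/-- Number of maximal weakly increasing contiguous subwords (runs of weak
ascents): `1 + #{ i : w_i > w_{i+1} }`. -/
noncomputable def wruns (n : ℕ) (w : ℕ → ℕ) : ℕ :=
  1 + {i : ℕ | i + 1 < n ∧ w (i + 1) < w i}.ncard

/-- Number of maximal strictly decreasing contiguous subwords (runs of
descents): `1 + #{ i : w_i ≤ w_{i+1} }`. -/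
noncomputable def runsDesc (n : ℕ) (w : ℕ → ℕ) : ℕ :=
  1 + {i : ℕ | i + 1 < n ∧ w i ≤ w (i + 1)}.ncard

/-- Number of maximal weakly decreasing contiguous subwords (runs of weak
descents): `1 + #{ i : w_i < w_{i+1} }`. -/
noncomputable def wrunsDesc (n : ℕ) (w : ℕ → ℕ) : ℕ :=
  1 + {i : ℕ | i + 1 < n ∧ w i < w (i + 1)}.ncard

/-- An `ℓ`-valley `a b^ℓ (b+1)` (with `a > b`) occurring at position `i` of the
length-`n` word `w`. -/
def IsLValley (n : ℕ) (w : ℕ → ℕ) (ℓ i : ℕ) : Prop :=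
  i + ℓ + 1 < n ∧ w (i + 1) < w i ∧ (∀ t, 1 ≤ t → t ≤ ℓ → w (i + t) = w (i + 1)) ∧
    w (i + ℓ + 1) = w (i + 1) + 1

/-- Number of `ℓ`-valleys of `w`. -/
noncomputable def lValleyCount (n : ℕ) (w : ℕ → ℕ) (ℓ : ℕ) : ℕ :=
  {i : ℕ | IsLValley n w ℓ i}.ncard

/-- Number of valleys of `w` (all `ℓ`-valleys, `ℓ ≥ 1`). -/
noncomputable def valleyCount (n : ℕ) (w : ℕ → ℕ) : ℕ :=
  {p : ℕ × ℕ | 1 ≤ p.2 ∧ IsLValley n w p.2 p.1}.ncard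

/-- A symmetric valley `a (a-1)^ℓ a` (with `ℓ ≥ 1`) occurring at position `i`. -/
def IsSymValley (n : ℕ) (w : ℕ → ℕ) (ℓ i : ℕ) : Prop :=
  i + ℓ + 1 < n ∧ w i = w (i + 1) + 1 ∧ (∀ t, 1 ≤ t → t ≤ ℓ → w (i + t) = w (i + 1)) ∧
    w (i + ℓ + 1) = w i

/-- Number of symmetric valleys of `w` (over all `ℓ ≥ 1`). -/
noncomputable def symValleyCount (n : ℕ) (w : ℕ → ℕ) : ℕ :=
  {p : ℕ × ℕ | 1 ≤ p.2 ∧ IsSymValley n w p.2 p.1}.ncard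

/-- An `ℓ`-peak `a (a+1)^ℓ b` (with `a ≥ b`) occurring at position `i` of the
length-`n` word `w`. -/
def IsLPeak (n : ℕ) (w : ℕ → ℕ) (ℓ i : ℕ) : Prop :=
  i + ℓ + 1 < n ∧ (∀ t, 1 ≤ t → t ≤ ℓ → w (i + t) = w i + 1) ∧ w (i + ℓ + 1) ≤ w i

/-- Number of `ℓ`-peaks of `w`. -/
noncomputable def lPeakCount (n : ℕ) (w : ℕ → ℕ) (ℓ : ℕ) : ℕ :=
  {i : ℕ | IsLPeak n w ℓ i}.ncard

/-- Number of peaks of `w` (all `ℓ`-peaks, `ℓ ≥ 1`). -/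
noncomputable def peakCount (n : ℕ) (w : ℕ → ℕ) : ℕ :=
  {p : ℕ × ℕ | 1 ≤ p.2 ∧ IsLPeak n w p.2 p.1}.ncard

/-- A symmetric peak `a (a+1)^ℓ a` (with `ℓ ≥ 1`) occurring at position `i`. -/
def IsSymPeak (n : ℕ) (w : ℕ → ℕ) (ℓ i : ℕ) : Prop :=
  i + ℓ + 1 < n ∧ (∀ t, 1 ≤ t → t ≤ ℓ → w (i + t) = w i + 1) ∧ w (i + ℓ + 1) = w i

/-- Number of symmetric peaks of `w` (over all `ℓ ≥ 1`). -/
noncomputable def symPeakCount (n : ℕ) (w : ℕ → ℕ) : ℕ :=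
  {p : ℕ × ℕ | 1 ≤ p.2 ∧ IsSymPeak n w p.2 p.1}.ncard


/-! ### Auxiliary development -/

/-- value of the most recent run start (weakly, position of last strict descent). -/
def mval (w : ℕ → ℕ) : ℕ → ℕ
  | 0 => 0
  | i + 1 => if w (i + 1) < w i then w (i + 1) else mval w i

def stepSt (s c : ℕ) : ℕ := if s ≤ c then c else 0

def stList (l : List ℕ) : ℕ := l.foldl stepSt 0

def Paths : ℕ → Finset (List ℕ)
  | 0 => {[]}
  | k + 1 => (Paths k).biUnion fun l =>
      (Finset.range (stList l + 2)).image fun c => l ++ [c]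

lemma stList_append (l : List ℕ) (c : ℕ) :
    stList (l ++ [c]) = stepSt (stList l) c := by
  simp [stList, List.foldl_append]

lemma mem_paths_succ {k : ℕ} {l' : List ℕ} :
    l' ∈ Paths (k + 1) ↔ ∃ l ∈ Paths k, ∃ c, c ≤ stList l + 1 ∧ l' = l ++ [c] := by
  simp only [Paths, Finset.mem_biUnion, Finset.mem_image, Finset.mem_range]
  constructor
  · rintro ⟨l, hl, c, hc, rfl⟩; exact ⟨l, hl, c, by omega, rfl⟩
  · rintro ⟨l, hl, c, hc, rfl⟩; exact ⟨l, hl, c, by omega, rfl⟩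

lemma length_of_mem_paths : ∀ {k : ℕ} {l : List ℕ}, l ∈ Paths k → l.length = k
  | 0, l, h => by simp only [Paths, Finset.mem_singleton] at h; simp [h]
  | k + 1, l', h => by
    obtain ⟨l, hl, c, _, rfl⟩ := mem_paths_succ.mp h
    simp [length_of_mem_paths hl]

lemma sum_paths_succ (k : ℕ) (g : List ℕ → ℕ) :
    ∑ l' ∈ Paths (k + 1), g l'
      = ∑ l ∈ Paths k, ∑ c ∈ Finset.range (stList l + 2), g (l ++ [c]) := by
  show ∑ l' ∈ (Paths k).biUnion _, g l' = _
  rw [Finset.sum_biUnion]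
  · refine Finset.sum_congr rfl fun l _ => ?_
    rw [Finset.sum_image]
    intro a _ b _ hab
    simpa using hab
  · intro a ha b hb hab
    refine Finset.disjoint_left.mpr fun x hxa hxb => hab ?_
    simp only [Finset.mem_image, Finset.mem_range] at hxa hxb
    obtain ⟨c, _, rfl⟩ := hxa
    obtain ⟨c', _, h⟩ := hxb
    have hlen : b.length = a.length := by
      rw [length_of_mem_paths ha, length_of_mem_paths hb]
    exact ((List.append_inj h.symm hlen.symm).1).symm ▸ rfl

lemma sum_stepSt (s : ℕ) :
    ∑ c ∈ Finset.range (s + 2), stepSt s c = 2 * s + 1 := by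
  have h0 : ∑ c ∈ Finset.range s, stepSt s c = 0 :=
    Finset.sum_eq_zero fun c hc => by
      simp only [Finset.mem_range] at hc
      simp [stepSt, Nat.not_le.mpr hc]
  rw [Finset.sum_range_succ, Finset.sum_range_succ, h0]
  simp [stepSt]
  omega

lemma paths_card (k : ℕ) :
    (∑ l ∈ Paths k, stList l) + 1 = (Paths k).card ∧
      2 * (Paths k).card = 3 ^ k + 1 := by
  induction k with
  | zero => simp [Paths, stList]
  | succ k ih =>
    obtain ⟨h1, h2⟩ := ih
    have hcard : (Paths (k + 1)).card
        = (∑ l ∈ Paths k, stList l) + 2 * (Paths k).card := by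
      have h := sum_paths_succ k (fun _ => 1)
      simp only [Finset.sum_const, Finset.card_range, smul_eq_mul, mul_one] at h
      rw [h, Finset.sum_add_distrib, Finset.sum_const, smul_eq_mul]
      omega
    have hsum : ∑ l' ∈ Paths (k + 1), stList l'
        = 2 * (∑ l ∈ Paths k, stList l) + (Paths k).card := by
      rw [sum_paths_succ]
      have : ∀ l ∈ Paths k,
          ∑ c ∈ Finset.range (stList l + 2), stList (l ++ [c]) = 2 * stList l + 1 := by
        intro l _
        simp only [stList_append]
        exact sum_stepSt _
      rw [Finset.sum_congr rfl this, Finset.sum_add_distrib, Finset.sum_const,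
        smul_eq_mul, mul_one, Finset.mul_sum]
    have h3 : (3:ℕ) ^ (k + 1) = 3 * 3 ^ k := by ring
    constructor <;> omega

lemma mval_le_self (w : ℕ → ℕ) : ∀ i, mval w i ≤ w i
  | 0 => Nat.zero_le _
  | i + 1 => by
    unfold mval
    split
    · exact le_rfl
    · next h => exact le_trans (mval_le_self w i) (Nat.le_of_not_lt h)

lemma mval_congr {w w' : ℕ → ℕ} : ∀ i, (∀ j, j ≤ i → w j = w' j) → mval w i = mval w' i
  | 0, _ => rfl
  | i + 1, h => by
    have hi : mval w i = mval w' i := mval_congr i fun j hj => h j (by omega)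
    simp only [mval, h (i + 1) le_rfl, h i (by omega), hi]

lemma exists_runstart {n : ℕ} {w : ℕ → ℕ} (h0 : w 0 = 0) :
    ∀ i, i < n → ∃ j, j ≤ i ∧ IsRunStart n w j ∧ w j = mval w i
  | 0, h => ⟨0, le_rfl, ⟨h, Or.inl rfl⟩, h0⟩
  | i + 1, h => by
    by_cases hd : w (i + 1) < w i
    · exact ⟨i + 1, le_rfl, ⟨h, Or.inr (by simpa using hd)⟩, by simp [mval, hd]⟩
    · obtain ⟨j, hj, hrs, he⟩ := exists_runstart h0 i (Nat.lt_of_succ_lt h)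
      exact ⟨j, by omega, hrs, by simp [mval, hd, he]⟩

lemma mval_le_next {n : ℕ} {w : ℕ → ℕ} (hw : w ∈ FlatCat n) {i : ℕ} (hi : i + 1 < n) :
    mval w i ≤ w (i + 1) := by
  by_cases hd : w (i + 1) < w i
  · obtain ⟨j, hj, hrs, he⟩ := exists_runstart hw.1.1 i (Nat.lt_of_succ_lt hi)
    have hrs' : IsRunStart n w (i + 1) := ⟨hi, Or.inr (by simpa using hd)⟩
    calc mval w i = w j := he.symm
      _ ≤ w (i + 1) := hw.2 j (i + 1) hrs hrs' (by omega)
  · exact le_trans (mval_le_self w i) (Nat.le_of_not_lt hd)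

def encode (n : ℕ) (w : ℕ → ℕ) : List ℕ :=
  (List.range (n - 1)).map fun i => w (i + 1) - mval w i

lemma encode_state {n : ℕ} {w : ℕ → ℕ} (hw : w ∈ FlatCat n) :
    ∀ i, i < n →
      stList ((List.range i).map fun j => w (j + 1) - mval w j) = w i - mval w i
  | 0, _ => by simp [stList, hw.1.1]
  | i + 1, h => by
    rw [List.range_succ, List.map_append, List.map_singleton, stList_append,
      encode_state hw i (by omega)]
    have h1 := mval_le_self w i
    have h2 := mval_le_next hw h
    by_cases hd : w (i + 1) < w i
    · have : ¬ (w i - mval w i ≤ w (i + 1) - mval w i) := by omega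
      simp [stepSt, this, mval, hd]
    · have hle : w i ≤ w (i + 1) := Nat.le_of_not_lt hd
      have : w i - mval w i ≤ w (i + 1) - mval w i := by omega
      simp [stepSt, this, mval, hd]

lemma encode_prefix_mem {n : ℕ} {w : ℕ → ℕ} (hw : w ∈ FlatCat n) :
    ∀ i, i ≤ n - 1 →
      ((List.range i).map fun j => w (j + 1) - mval w j) ∈ Paths i
  | 0, _ => by simp [Paths]
  | i + 1, h => by
    have hn : i + 1 < n := by omega
    rw [List.range_succ, List.map_append, List.map_singleton]
    refine mem_paths_succ.mpr ⟨_, encode_prefix_mem hw i (by omega), _, ?_, rfl⟩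
    rw [encode_state hw i (by omega)]
    have h1 := mval_le_self w i
    have h2 := hw.1.2.1 i hn
    omega

lemma encode_mem {n : ℕ} (_hn : 1 ≤ n) {w : ℕ → ℕ} (hw : w ∈ FlatCat n) :
    encode n w ∈ Paths (n - 1) :=
  encode_prefix_mem hw (n - 1) le_rfl

lemma encode_injOn (n : ℕ) : Set.InjOn (encode n) (FlatCat n) := by
  intro w hw w' hw' he
  have key : ∀ i, w i = w' i := by
    intro i
    induction i using Nat.strong_induction_on with
    | _ i ih =>
      match i with
      | 0 => rw [hw.1.1, hw'.1.1]
      | j + 1 =>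
        by_cases hjn : j + 1 < n
        · have hmem : j ∈ List.range (n - 1) := by
            rw [List.mem_range]; omega
          have hfe : w (j + 1) - mval w j = w' (j + 1) - mval w' j := by
            have := List.map_eq_map_iff.mp he
            exact this j hmem
          have hm : mval w j = mval w' j := mval_congr j fun t ht => ih t (by omega)
          have h1 := mval_le_next hw hjn
          have h2 := mval_le_next hw' hjn
          omega
        · rw [hw.1.2.2 (j + 1) (by omega), hw'.1.2.2 (j + 1) (by omega)]
  funext i
  exact key i

def dec (l : List ℕ) : ℕ → ℕ × ℕ
  | 0 => (0, 0)
  | i + 1 =>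
    if h : i < l.length then
      ((dec l i).2 + l[i],
        if (dec l i).2 + l[i] < (dec l i).1 then (dec l i).2 + l[i] else (dec l i).2)
    else (0, 0)

def dw (l : List ℕ) (i : ℕ) : ℕ := (dec l i).1

lemma dec_succ (l : List ℕ) (i : ℕ) (h : i < l.length) :
    dec l (i + 1) = ((dec l i).2 + l[i],
      if (dec l i).2 + l[i] < (dec l i).1 then (dec l i).2 + l[i] else (dec l i).2) := by
  simp [dec, h]

lemma dec_succ_of_ge (l : List ℕ) (i : ℕ) (h : l.length ≤ i) : dec l (i + 1) = (0, 0) := by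
  simp [dec, Nat.not_lt.mpr h]

lemma dec_snd_le (l : List ℕ) : ∀ i, (dec l i).2 ≤ (dec l i).1
  | 0 => le_rfl
  | i + 1 => by
    by_cases h : i < l.length
    · rw [dec_succ l i h]
      dsimp only
      split <;> omega
    · rw [dec_succ_of_ge l i (by omega)]

lemma dec_snd_mono_succ (l : List ℕ) (i : ℕ) :
    (dec l i).2 ≤ (dec l (i + 1)).2 ∨ (dec l (i + 1)).2 = 0 := by
  by_cases h : i < l.length
  · left
    rw [dec_succ l i h]
    dsimp only
    split <;> omega
  · right
    rw [dec_succ_of_ge l i (by omega)]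

lemma dec_snd_mono (l : List ℕ) {i j : ℕ} (hij : i ≤ j) (hj : j ≤ l.length) :
    (dec l i).2 ≤ (dec l j).2 := by
  induction j with
  | zero => simp_all
  | succ j ihj =>
    rcases Nat.lt_or_ge j l.length with h | h
    · rcases Nat.eq_or_lt_of_le hij with rfl | hlt
      · exact le_rfl
      · refine le_trans (ihj (by omega) (by omega)) ?_
        rw [dec_succ l j h]
        dsimp only
        split <;> omega
    · omega

lemma mval_dw (l : List ℕ) : ∀ i, mval (dw l) i = (dec l i).2
  | 0 => rfl
  | i + 1 => by
    have ih := mval_dw l i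
    by_cases h : i < l.length
    · have hd := dec_succ l i h
      simp only [mval, dw, hd, ih]
    · have hd := dec_succ_of_ge l i (by omega)
      have hle := dec_snd_le l i
      simp only [mval, dw, hd, ih]
      by_cases h0 : (dec l i).1 = 0
      · simp [h0]
        omega
      · have : (0:ℕ) < (dec l i).1 := by omega
        simp [this]

lemma dw_ge (l : List ℕ) : ∀ i, l.length + 1 ≤ i → dw l i = 0
  | 0, h => by omega
  | j + 1, h => by simp [dw, dec_succ_of_ge l j (by omega)]

lemma paths_get : ∀ {k : ℕ} {l : List ℕ}, l ∈ Paths k →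
    ∀ i (h : i < l.length), l[i] ≤ stList (l.take i) + 1
  | 0, l, hl => by
    simp only [Paths, Finset.mem_singleton] at hl
    subst hl
    intro i h
    simp at h
  | k + 1, l', hl' => by
    obtain ⟨l, hl, c, hc, rfl⟩ := mem_paths_succ.mp hl'
    have hlen := length_of_mem_paths hl
    intro i h
    rcases Nat.lt_or_ge i l.length with hi | hi
    · rw [List.getElem_append_left hi, List.take_append_of_le_length (by omega)]
      exact paths_get hl i hi
    · have hieq : i = l.length := by
        simp only [List.length_append, List.length_singleton] at h
        omega
      subst hieq
      rw [List.getElem_concat_length (l := l) (a := c) (i := l.length) rfl h, List.take_left]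
      exact hc

lemma dec_state {l : List ℕ}
    (hv : ∀ i (h : i < l.length), l[i] ≤ stList (l.take i) + 1) :
    ∀ i, i ≤ l.length → stList (l.take i) = (dec l i).1 - (dec l i).2
  | 0, _ => rfl
  | i + 1, h => by
    have hi : i < l.length := by omega
    have ih := dec_state hv i (by omega)
    have htake : l.take (i + 1) = l.take i ++ [l[i]] :=
      (List.take_concat_get' l i hi).symm
    rw [htake, stList_append, ih]
    have hle := dec_snd_le l i
    rw [dec_succ l i hi]
    dsimp only
    by_cases hc : (dec l i).1 - (dec l i).2 ≤ l[i]
    · have : ¬ ((dec l i).2 + l[i] < (dec l i).1) := by omega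
      simp [stepSt, hc, this]
    · have : (dec l i).2 + l[i] < (dec l i).1 := by omega
      simp [stepSt, hc, this]

lemma runstart_val {k : ℕ} {l : List ℕ} {r : ℕ}
    (hr : IsRunStart (k + 1) (dw l) r) : dw l r = (dec l r).2 := by
  rcases hr.2 with h0 | hd
  · subst h0; rfl
  · match r, hd with
    | t + 1, hd =>
      have : mval (dw l) (t + 1) = dw l (t + 1) := by
        simp only [Nat.add_sub_cancel] at hd
        simp [mval, hd]
      rw [← this, mval_dw]

lemma dw_mem {k : ℕ} {l : List ℕ} (hl : l ∈ Paths k) : dw l ∈ FlatCat (k + 1) := by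
  have hlen := length_of_mem_paths hl
  have hv := paths_get hl
  refine ⟨⟨rfl, ?_, ?_⟩, ?_⟩
  · intro i hi
    have hik : i < l.length := by omega
    have h1 := dec_snd_le l i
    have h2 := hv i hik
    have h3 := dec_state hv i (by omega)
    have h4 := dec_succ l i hik
    simp only [dw, h4]
    omega
  · intro i hi
    exact dw_ge l i (by omega)
  · intro i j hri hrj hij
    rw [runstart_val hri, runstart_val hrj]
    have h5 := hrj.1
    exact dec_snd_mono l hij (by omega)

lemma encode_dw {k : ℕ} {l : List ℕ} (hl : l ∈ Paths k) :
    encode (k + 1) (dw l) = l := by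
  have hlen := length_of_mem_paths hl
  apply List.ext_getElem
  · simp [encode, hlen]
  · intro i h1 h2
    simp only [encode, Nat.add_sub_cancel, List.getElem_map, List.getElem_range]
    have hik : i < l.length := by
      simp only [encode, Nat.add_sub_cancel, List.length_map, List.length_range] at h1
      omega
    rw [mval_dw, dw, dec_succ l i hik]
    simp

lemma encode_image {n : ℕ} (hn : 1 ≤ n) :
    encode n '' FlatCat n = ↑(Paths (n - 1)) := by
  obtain ⟨k, rfl⟩ : ∃ k, n = k + 1 := ⟨n - 1, by omega⟩
  ext l
  simp only [Set.mem_image, Finset.coe_sort_coe, Finset.mem_coe, Nat.add_sub_cancel]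
  constructor
  · rintro ⟨w, hw, rfl⟩
    exact encode_mem (by omega) hw
  · intro hl
    exact ⟨dw l, dw_mem hl, encode_dw hl⟩

/-- For every integer `n ≥ 1`, the number of flattened Catalan words of length
`n` equals `(3^(n-1) + 1)/2`. -/
theorem flatCat_card (n : ℕ) (hn : 1 ≤ n) :
    ((FlatCat n).ncard : ℚ) = (3 ^ (n - 1) + 1) / 2 := by
  have h1 : (FlatCat n).ncard = (Paths (n - 1)).card := by
    rw [← Set.ncard_coe_finset, ← encode_image hn,
      Set.ncard_image_of_injOn (encode_injOn n)]
  have h2 := (paths_card (n - 1)).2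
  have h3 : (2 * (Paths (n - 1)).card : ℚ) = 3 ^ (n - 1) + 1 := by
    exact_mod_cast h2
  rw [h1]
  rw [eq_div_iff (by norm_num : (2:ℚ) ≠ 0)]
  linarith
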